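/- Let S be an inverse semigroup and let α : S → S be a premorphism that preserves the heap operation, i.e. α(a*b⁻¹*c) = α(a)*(α(b))⁻¹*α(c) for all a, b, c ∈ S. Then α is a semigroup homomorphism: α(a*c) = α(a)*α(c) for all a, c ∈ S. -/
import Mathlib


/-- An inverse semigroup: a semigroup in which every element `a` has a
(unique) inverse `a⁻¹` with `a * a⁻¹ * a = a` and `a⁻¹ * a * a⁻¹ = a⁻¹`. -/
class InverseSemigroup (S : Type*) extends Semigroup S, Inv S where
  mul_inv_mul : ∀ a : S, a * a⁻¹ * a = a
  inv_mul_inv : ∀ a : S, a⁻¹ * a * a⁻¹ = a⁻¹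
  inv_unique : ∀ a b : S, a * b * a = a → b * a * b = b → b = a⁻¹

/-- The natural partial order on an inverse semigroup:
`a ≤ b` iff `a = e * b` for some idempotent `e`. -/
def npo {S : Type*} [InverseSemigroup S] (a b : S) : Prop :=
  ∃ e : S, e * e = e ∧ a = e * b

/-- A premorphism of inverse semigroups: `θ (a * b) ≤ θ a * θ b` in the
natural partial order of the codomain. -/
def IsPremorphism {S T : Type*} [InverseSemigroup S] [InverseSemigroup T]
    (θ : S → T) : Prop :=
  ∀ a b : S, npo (θ (a * b)) (θ a * θ b)

section Aux

variable {S : Type*} [InverseSemigroup S]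

open InverseSemigroup

private theorem inv_inv'' (a : S) : a⁻¹⁻¹ = a :=
  (inv_unique a⁻¹ a (inv_mul_inv a) (mul_inv_mul a)).symm

private theorem idem_inv {e : S} (he : e * e = e) : e⁻¹ = e := by
  have h3 : e * e * e = e := by rw [he, he]
  exact (inv_unique e e h3 h3).symm

private theorem idem_mul_inv (b : S) : (b * b⁻¹) * (b * b⁻¹) = b * b⁻¹ := by
  calc (b * b⁻¹) * (b * b⁻¹) = (b * b⁻¹ * b) * b⁻¹ := by simp only [mul_assoc]
    _ = b * b⁻¹ := by rw [mul_inv_mul]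

private theorem idem_inv_mul (b : S) : (b⁻¹ * b) * (b⁻¹ * b) = b⁻¹ * b := by
  calc (b⁻¹ * b) * (b⁻¹ * b) = (b⁻¹ * b * b⁻¹) * b := by simp only [mul_assoc]
    _ = b⁻¹ * b := by rw [inv_mul_inv]

/-- The product of two idempotents is idempotent. -/
private theorem idem_mul_idem {e f : S} (he : e * e = e) (hf : f * f = f) :
    (e * f) * (e * f) = e * f := by
  set x := (e * f)⁻¹ with hx
  have h1 : (e * f) * (f * x * e) * (e * f) = e * f := by
    calc (e * f) * (f * x * e) * (e * f)
        = e * (f * f) * x * (e * e) * f := by simp only [mul_assoc]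
      _ = (e * f) * x * (e * f) := by rw [he, hf]; simp only [mul_assoc]
      _ = e * f := by rw [hx, mul_inv_mul]
  have h2 : (f * x * e) * (e * f) * (f * x * e) = f * x * e := by
    calc (f * x * e) * (e * f) * (f * x * e)
        = f * (x * ((e * e) * (f * f)) * x) * e := by simp only [mul_assoc]
      _ = f * (x * (e * f) * x) * e := by rw [he, hf]
      _ = f * x * e := by rw [hx, inv_mul_inv]
  have hfxe : f * x * e = x := inv_unique (e * f) (f * x * e) h1 h2
  have hxx : x * x = x := by
    calc x * x = (f * x * e) * (f * x * e) := by rw [hfxe]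
      _ = f * (x * (e * f) * x) * e := by simp only [mul_assoc]
      _ = f * x * e := by rw [hx, inv_mul_inv]
      _ = x := hfxe
  have hefx : e * f = x := by
    calc e * f = (e * f)⁻¹⁻¹ := (inv_inv'' _).symm
      _ = x⁻¹ := by rw [← hx]
      _ = x := idem_inv hxx
  rw [hefx, hxx]

/-- Idempotents commute. -/
private theorem idem_comm {e f : S} (he : e * e = e) (hf : f * f = f) :
    e * f = f * e := by
  have hef := idem_mul_idem he hf
  have hfe := idem_mul_idem hf he
  have h1 : (e * f) * (f * e) * (e * f) = e * f := by
    calc (e * f) * (f * e) * (e * f)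
        = e * ((f * f) * (e * e)) * f := by simp only [mul_assoc]
      _ = (e * f) * (e * f) := by rw [he, hf]; simp only [mul_assoc]
      _ = e * f := hef
  have h2 : (f * e) * (e * f) * (f * e) = f * e := by
    calc (f * e) * (e * f) * (f * e)
        = f * ((e * e) * (f * f)) * e := by simp only [mul_assoc]
      _ = (f * e) * (f * e) := by rw [he, hf]; simp only [mul_assoc]
      _ = f * e := hfe
  have := inv_unique (e * f) (f * e) h1 h2
  rw [this, idem_inv hef]

private theorem mul_inv_rev' (a b : S) : (a * b)⁻¹ = b⁻¹ * a⁻¹ := by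
  have hcomm := idem_comm (idem_mul_inv b) (idem_inv_mul a)
  have h1 : (a * b) * (b⁻¹ * a⁻¹) * (a * b) = a * b := by
    calc (a * b) * (b⁻¹ * a⁻¹) * (a * b)
        = a * ((b * b⁻¹) * (a⁻¹ * a)) * b := by simp only [mul_assoc]
      _ = a * ((a⁻¹ * a) * (b * b⁻¹)) * b := by rw [hcomm]
      _ = (a * a⁻¹ * a) * (b * b⁻¹ * b) := by simp only [mul_assoc]
      _ = a * b := by rw [mul_inv_mul, mul_inv_mul]
  have h2 : (b⁻¹ * a⁻¹) * (a * b) * (b⁻¹ * a⁻¹) = b⁻¹ * a⁻¹ := by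
    calc (b⁻¹ * a⁻¹) * (a * b) * (b⁻¹ * a⁻¹)
        = b⁻¹ * ((a⁻¹ * a) * (b * b⁻¹)) * a⁻¹ := by simp only [mul_assoc]
      _ = b⁻¹ * ((b * b⁻¹) * (a⁻¹ * a)) * a⁻¹ := by rw [hcomm]
      _ = (b⁻¹ * b * b⁻¹) * (a⁻¹ * a * a⁻¹) := by simp only [mul_assoc]
      _ = b⁻¹ * a⁻¹ := by rw [inv_mul_inv, inv_mul_inv]
  exact (inv_unique (a * b) (b⁻¹ * a⁻¹) h1 h2).symm

/-- `x ≤ y` follows from `x = y * f` with `f` idempotent. -/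
private theorem npo_of_right {x y f : S} (hf : f * f = f) (hxy : x = y * f) :
    npo x y := by
  refine ⟨y * f * y⁻¹, ?_, ?_⟩
  · have hcomm := idem_comm hf (idem_inv_mul y)
    calc (y * f * y⁻¹) * (y * f * y⁻¹)
        = y * (f * (y⁻¹ * y) * f) * y⁻¹ := by simp only [mul_assoc]
      _ = y * ((y⁻¹ * y) * (f * f)) * y⁻¹ := by
          rw [show f * (y⁻¹ * y) * f = ((y⁻¹ * y) * f) * f from by rw [hcomm]]
          simp only [mul_assoc]
      _ = (y * y⁻¹ * y) * (f * y⁻¹) := by rw [hf]; simp only [mul_assoc]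
      _ = y * f * y⁻¹ := by rw [mul_inv_mul]; simp only [mul_assoc]
  · have hcomm := idem_comm hf (idem_inv_mul y)
    calc x = y * f := hxy
      _ = (y * y⁻¹ * y) * f := by rw [mul_inv_mul]
      _ = y * ((y⁻¹ * y) * f) := by simp only [mul_assoc]
      _ = y * (f * (y⁻¹ * y)) := by rw [hcomm]
      _ = (y * f * y⁻¹) * y := by simp only [mul_assoc]

/-- `x ≤ y` gives `x = y * f` with `f` idempotent. -/
private theorem npo_to_right {x y : S} (h : npo x y) :
    ∃ f : S, f * f = f ∧ x = y * f := by
  obtain ⟨e, he, hxy⟩ := h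
  refine ⟨y⁻¹ * e * y, ?_, ?_⟩
  · have hcomm := idem_comm he (idem_mul_inv y)
    calc (y⁻¹ * e * y) * (y⁻¹ * e * y)
        = y⁻¹ * (e * (y * y⁻¹) * e) * y := by simp only [mul_assoc]
      _ = y⁻¹ * ((y * y⁻¹) * (e * e)) * y := by
          rw [show e * (y * y⁻¹) * e = ((y * y⁻¹) * e) * e from by rw [hcomm]]
          simp only [mul_assoc]
      _ = (y⁻¹ * y * y⁻¹) * (e * y) := by rw [he]; simp only [mul_assoc]
      _ = y⁻¹ * e * y := by rw [inv_mul_inv]; simp only [mul_assoc]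
  · have hcomm := idem_comm he (idem_mul_inv y)
    calc x = e * y := hxy
      _ = e * (y * y⁻¹ * y) := by rw [mul_inv_mul]
      _ = (e * (y * y⁻¹)) * y := by simp only [mul_assoc]
      _ = ((y * y⁻¹) * e) * y := by rw [hcomm]
      _ = y * (y⁻¹ * e * y) := by simp only [mul_assoc]

private theorem npo_antisymm {x y : S} (h1 : npo x y) (h2 : npo y x) : x = y := by
  obtain ⟨e, he, hx⟩ := h1
  obtain ⟨f, hf, hy⟩ := h2
  have hfy : f * y = y := by
    conv_lhs => rw [hy]
    rw [← mul_assoc, hf, ← hy]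
  calc x = e * y := hx
    _ = e * (f * y) := by rw [hfy]
    _ = (e * f) * y := by rw [mul_assoc]
    _ = (f * e) * y := by rw [idem_comm he hf]
    _ = f * (e * y) := by rw [mul_assoc]
    _ = f * x := by rw [hx]
    _ = y := hy.symm

private theorem npo_inv {x y : S} (h : npo x y) : npo x⁻¹ y⁻¹ := by
  obtain ⟨e, he, hxy⟩ := h
  have : x⁻¹ = y⁻¹ * e := by
    rw [hxy, mul_inv_rev', idem_inv he]
  exact npo_of_right he this

private theorem npo_mul_left {x y : S} (z : S) (h : npo x y) : npo (z * x) (z * y) := by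
  obtain ⟨f, hf, hxy⟩ := npo_to_right h
  exact npo_of_right hf (by rw [hxy, mul_assoc])

/-- `x ≤ y` implies `x = x * x⁻¹ * y`. -/
private theorem npo_eq {x y : S} (h : npo x y) : x = x * x⁻¹ * y := by
  obtain ⟨e, he, hxy⟩ := h
  have hxinv : x⁻¹ = y⁻¹ * e := by rw [hxy, mul_inv_rev', idem_inv he]
  have hcomm := idem_comm he (idem_mul_inv y)
  calc x = e * y := hxy
    _ = e * (e * ((y * y⁻¹) * y)) := by rw [mul_inv_mul, ← mul_assoc, he]
    _ = e * (e * (y * y⁻¹)) * y := by simp only [mul_assoc]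
    _ = e * ((y * y⁻¹) * e) * y := by rw [hcomm]
    _ = (e * y) * (y⁻¹ * e) * y := by simp only [mul_assoc]
    _ = x * x⁻¹ * y := by rw [← hxy, ← hxinv]

end Aux

theorem heap_preserving_premorphism_is_hom {S : Type*} [InverseSemigroup S]
    (α : S → S) (hα : IsPremorphism α)
    (hheap : ∀ a b c : S, α (a * b⁻¹ * c) = α a * (α b)⁻¹ * α c) :
    ∀ a c : S, α (a * c) = α a * α c := by
  intro a c
  open InverseSemigroup in
  set e := c * c⁻¹ with he_def
  have he : e * e = e := idem_mul_inv c
  have hec : e * c = c := by rw [he_def, mul_inv_mul]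
  set k := α e with hk
  set u := α c with hu
  set u' := α a with hu'
  -- heap identity: α (a * c) = u' * k⁻¹ * u
  have heq : α (a * c) = u' * k⁻¹ * u := by
    have h := hheap a e c
    rwa [idem_inv he, show a * e * c = a * c from by rw [mul_assoc, hec]] at h
  -- premorphism: u ≤ k * u
  have hstep2 : npo u (k * u) := by
    have h := hα e c
    rwa [hec] at h
  -- hence u⁻¹ = u⁻¹ * k⁻¹
  have h4 : u⁻¹ = u⁻¹ * k⁻¹ := by
    have hinv : npo u⁻¹ (u⁻¹ * k⁻¹) := by
      have := npo_inv hstep2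
      rwa [mul_inv_rev'] at this
    have := npo_eq hinv
    rwa [inv_inv'', show u⁻¹ * u * (u⁻¹ * k⁻¹) = (u⁻¹ * u * u⁻¹) * k⁻¹ from by
      simp only [mul_assoc], inv_mul_inv] at this
  -- hence u ≤ k⁻¹ * u
  have h6 : npo u (k⁻¹ * u) := by
    refine ⟨u * u⁻¹, idem_mul_inv u, ?_⟩
    calc u = u * u⁻¹ * u := (mul_inv_mul u).symm
      _ = u * (u⁻¹ * k⁻¹) * u := by rw [← h4]
      _ = u * u⁻¹ * (k⁻¹ * u) := by simp only [mul_assoc]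
  -- hence u' * u ≤ α (a * c)
  have h7 : npo (u' * u) (α (a * c)) := by
    have := npo_mul_left u' h6
    rwa [show u' * (k⁻¹ * u) = u' * k⁻¹ * u from by simp only [mul_assoc], ← heq] at this
  exact npo_antisymm (hα a c) h7
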